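/- arXiv:2207.13892 — 4 statements merged into one kernel-verified Lean document; each statement's English description precedes it below -/
import Mathlib

section
/- Let d ≥ 1, let α > 0, and let k ≥ 2. Suppose there exist k points v_1, …, v_k ∈ S^d that are pairwise at geodesic distance exactly α (a k-clique in the exact distance graph D⁰(α)). Then for every ε with 0 < ε < α and every finite (ε/4)-net X of S^d, the chromatic number of the ε-distance graph D_{X,ε}(α) is at least k+1. -/
open scoped RealInnerProductSpace

/-- Geodesic distance `arccos ⟨x, y⟩` on the unit sphere in `ℝ^n`. -/
noncomputable def gd {n : ℕ} (x y : EuclideanSpace ℝ (Fin n)) : ℝ :=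
  Real.arccos (inner ℝ x y : ℝ)

lemma gd_comm {n : ℕ} (x y : EuclideanSpace ℝ (Fin n)) : gd x y = gd y x := by
  rw [gd, gd, real_inner_comm]

/-- The unit sphere `S^d ⊆ ℝ^{d+1}`. -/
noncomputable def unitSphere (d : ℕ) : Set (EuclideanSpace ℝ (Fin (d + 1))) :=
  Metric.sphere 0 1

/-- `X` is an `r`-net of `S^d`: every point of the sphere is within geodesic
distance `r` of a point of `X`. -/
def IsNet (d : ℕ) (r : ℝ) (X : Set (EuclideanSpace ℝ (Fin (d + 1)))) : Prop :=
  ∀ y ∈ unitSphere d, ∃ x ∈ X, gd x y ≤ r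

/-- The ε-distance graph with parameter α on a set `X ⊆ ℝ^n`: distinct points are
adjacent iff their geodesic distance lies in `[α - ε, α + ε]`. -/
noncomputable def distGraph {n : ℕ} (X : Set (EuclideanSpace ℝ (Fin n))) (α ε : ℝ) :
    SimpleGraph X where
  Adj x y := x ≠ y ∧ α - ε ≤ gd x.1 y.1 ∧ gd x.1 y.1 ≤ α + ε
  symm := ⟨by
    intro x y h
    exact ⟨h.1.symm, by rw [gd_comm]; exact h.2.1, by rw [gd_comm]; exact h.2.2⟩⟩
  loopless := ⟨fun x h => h.1 rfl⟩

/- ### Auxiliary lemmas -/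

lemma arccos_anti' {x y : ℝ} (h : x ≤ y) : Real.arccos y ≤ Real.arccos x := by
  rw [Real.arccos_eq_pi_div_two_sub_arcsin, Real.arccos_eq_pi_div_two_sub_arcsin]
  have := Real.monotone_arcsin h
  linarith

lemma inner_bounds' {n : ℕ} {a b : EuclideanSpace ℝ (Fin n)} (ha : ‖a‖ = 1) (hb : ‖b‖ = 1) :
    -1 ≤ (inner ℝ a b : ℝ) ∧ (inner ℝ a b : ℝ) ≤ 1 := by
  have := abs_real_inner_le_norm a b
  rw [ha, hb] at this
  constructor <;> [linarith [neg_abs_le (inner ℝ a b : ℝ)]; linarith [le_abs_self (inner ℝ a b : ℝ)]]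

lemma key_inner' {n : ℕ} {a b c : EuclideanSpace ℝ (Fin n)} (ha : ‖a‖ = 1) (hb : ‖b‖ = 1)
    (hc : ‖c‖ = 1) :
    (inner ℝ a b : ℝ) * (inner ℝ b c : ℝ)
      - Real.sqrt (1 - (inner ℝ a b : ℝ) ^ 2) * Real.sqrt (1 - (inner ℝ b c : ℝ) ^ 2)
      ≤ (inner ℝ a c : ℝ) := by
  set p : ℝ := inner ℝ a b with hp
  set q : ℝ := inner ℝ b c with hq
  have hbb : (inner ℝ b b : ℝ) = 1 := by
    rw [real_inner_self_eq_norm_sq, hb]; norm_num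
  have h1 : (inner ℝ (a - p • b) (c - q • b) : ℝ) = (inner ℝ a c : ℝ) - p * q := by
    simp only [inner_sub_left, inner_sub_right, real_inner_smul_left, real_inner_smul_right,
      hbb]
    rw [← hp, ← hq]
    ring
  have hna : ‖a - p • b‖ = Real.sqrt (1 - p ^ 2) := by
    have : ‖a - p • b‖ ^ 2 = 1 - p ^ 2 := by
      rw [norm_sub_sq_real, real_inner_smul_right, ← hp, norm_smul, ha, hb]
      simp [abs_mul_abs_self]
      ring
    rw [← this, Real.sqrt_sq (norm_nonneg _)]
  have hnc : ‖c - q • b‖ = Real.sqrt (1 - q ^ 2) := by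
    have : ‖c - q • b‖ ^ 2 = 1 - q ^ 2 := by
      rw [norm_sub_sq_real, real_inner_smul_right, real_inner_comm b c, ← hq, norm_smul, hc,
        hb]
      simp [abs_mul_abs_self]
      ring
    rw [← this, Real.sqrt_sq (norm_nonneg _)]
  have h2 := abs_real_inner_le_norm (a - p • b) (c - q • b)
  rw [h1, hna, hnc] at h2
  have h3 : -(Real.sqrt (1 - p ^ 2) * Real.sqrt (1 - q ^ 2)) ≤ (inner ℝ a c : ℝ) - p * q := by
    calc -(Real.sqrt (1 - p ^ 2) * Real.sqrt (1 - q ^ 2)) ≤ -|(inner ℝ a c : ℝ) - p * q| := by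
          linarith
      _ ≤ (inner ℝ a c : ℝ) - p * q := neg_abs_le _
  linarith

/-- Triangle inequality for the geodesic distance on the unit sphere. -/
lemma gd_triangle {n : ℕ} {a b c : EuclideanSpace ℝ (Fin n)} (ha : ‖a‖ = 1) (hb : ‖b‖ = 1)
    (hc : ‖c‖ = 1) : gd a c ≤ gd a b + gd b c := by
  by_cases h : gd a b + gd b c ≤ Real.pi
  · have hab := inner_bounds' ha hb
    have hbc := inner_bounds' hb hc
    have hcos : Real.cos (gd a b + gd b c) ≤ (inner ℝ a c : ℝ) := by
      rw [gd, gd, Real.cos_add, Real.cos_arccos hab.1 hab.2, Real.cos_arccos hbc.1 hbc.2,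
        Real.sin_arccos, Real.sin_arccos]
      exact key_inner' ha hb hc
    calc gd a c ≤ Real.arccos (Real.cos (gd a b + gd b c)) := arccos_anti' hcos
      _ = gd a b + gd b c := Real.arccos_cos
          (add_nonneg (Real.arccos_nonneg _) (Real.arccos_nonneg _)) h
  · exact (Real.arccos_le_pi _).trans (le_of_not_ge h)

lemma gd_self' {n : ℕ} {a : EuclideanSpace ℝ (Fin n)} (ha : ‖a‖ = 1) : gd a a = 0 := by
  rw [gd, real_inner_self_eq_norm_sq, ha]
  norm_num

lemma gd_isometry {n : ℕ} (g : EuclideanSpace ℝ (Fin n) ≃ₗᵢ[ℝ] EuclideanSpace ℝ (Fin n))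
    (a b : EuclideanSpace ℝ (Fin n)) : gd (g a) (g b) = gd a b := by
  rw [gd, gd, LinearIsometryEquiv.inner_map_map]

lemma exists_isometry_map {n : ℕ} {a y : EuclideanSpace ℝ (Fin n)} (ha : ‖a‖ = 1)
    (hy : ‖y‖ = 1) :
    ∃ g : EuclideanSpace ℝ (Fin n) ≃ₗᵢ[ℝ] EuclideanSpace ℝ (Fin n), g a = y := by
  rcases eq_or_ne a y with rfl | hne
  · exact ⟨LinearIsometryEquiv.refl ℝ _, rfl⟩
  · exact ⟨Submodule.reflection (ℝ ∙ (a - y))ᗮ, Submodule.reflection_sub (ha.trans hy.symm)⟩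

/-- a `k`-clique in the exact distance graph `D⁰(α)` forces
`χ(D_{X,ε}(α)) ≥ k + 1` for every finite `(ε/4)`-net `X` of `S^d`. -/
theorem stmt_2 (d k : ℕ) (hd : 1 ≤ d) (hk : 2 ≤ k) (α : ℝ) (hα : 0 < α)
    (v : Fin k → EuclideanSpace ℝ (Fin (d + 1))) (hvS : ∀ i, v i ∈ unitSphere d)
    (hclique : ∀ i j, i ≠ j → gd (v i) (v j) = α)
    (ε : ℝ) (hε0 : 0 < ε) (hεα : ε < α)
    (X : Set (EuclideanSpace ℝ (Fin (d + 1)))) (hXS : X ⊆ unitSphere d)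
    (hXfin : X.Finite) (hnet : IsNet d (ε / 4) X) :
    (k + 1 : ℕ) ≤ (distGraph X α ε).chromaticNumber := by
  by_contra hcon
  -- Get a proper colouring with `k` colours.
  have hle : (distGraph X α ε).chromaticNumber ≤ (k : ℕ∞) := by
    have hlt : (distGraph X α ε).chromaticNumber < ((k + 1 : ℕ) : ℕ∞) := lt_of_not_ge hcon
    rw [Nat.cast_add, Nat.cast_one] at hlt
    exact (ENat.lt_add_one_iff (ENat.coe_ne_top k)).mp hlt
  obtain ⟨c⟩ := SimpleGraph.chromaticNumber_le_iff_colorable.mp hle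
  -- basic facts
  have hXn : ∀ x : X, ‖(x : EuclideanSpace ℝ (Fin (d + 1)))‖ = 1 := fun x =>
    mem_sphere_zero_iff_norm.mp (hXS x.2)
  have hvn : ∀ i, ‖v i‖ = 1 := fun i => mem_sphere_zero_iff_norm.mp (hvS i)
  obtain ⟨i0, i1, h01⟩ : ∃ i0 i1 : Fin k, i0 ≠ i1 :=
    ⟨⟨0, by omega⟩, ⟨1, by omega⟩, by simp [Fin.ext_iff]⟩
  have hαπ : α ≤ Real.pi := by
    rw [← hclique i0 i1 h01]; exact Real.arccos_le_pi _
  -- the colour predicate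
  let col : EuclideanSpace ℝ (Fin (d + 1)) → Fin k → Prop := fun y i =>
    ∃ x : X, gd x.1 y ≤ ε / 4 ∧ c x = i
  have hne : ∀ y : EuclideanSpace ℝ (Fin (d + 1)), ‖y‖ = 1 → ∃ i, col y i := by
    intro y hy
    obtain ⟨x, hx, hgd⟩ := hnet y (mem_sphere_zero_iff_norm.mpr hy)
    exact ⟨c ⟨x, hx⟩, ⟨x, hx⟩, hgd, rfl⟩
  -- points at a near-α distance get different colours
  have hdisj : ∀ y z : EuclideanSpace ℝ (Fin (d + 1)), ‖y‖ = 1 → ‖z‖ = 1 →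
      α - ε / 2 ≤ gd y z → gd y z ≤ α + ε / 2 → ∀ i, col y i → col z i → False := by
    intro y z hy hz h1 h2 i hcy hcz
    obtain ⟨x, hxy, hcx⟩ := hcy
    obtain ⟨x', hx'z, hcx'⟩ := hcz
    have hx := hXn x
    have hx' := hXn x'
    have t1 : gd x.1 x'.1 ≤ α + ε := by
      have a1 : gd x.1 x'.1 ≤ gd x.1 y + gd y x'.1 := gd_triangle hx hy hx'
      have a2 : gd y x'.1 ≤ gd y z + gd z x'.1 := gd_triangle hy hz hx'
      have a3 : gd z x'.1 = gd x'.1 z := gd_comm _ _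
      linarith
    have t2 : α - ε ≤ gd x.1 x'.1 := by
      have a1 : gd y z ≤ gd y x.1 + gd x.1 z := gd_triangle hy hx hz
      have a2 : gd x.1 z ≤ gd x.1 x'.1 + gd x'.1 z := gd_triangle hx hx' hz
      have a3 : gd y x.1 = gd x.1 y := gd_comm _ _
      linarith
    have hxx' : x ≠ x' := by
      rintro rfl
      rw [gd_self' hx] at t2
      linarith
    exact c.valid (show (distGraph X α ε).Adj x x' from
      (show x ≠ x' ∧ α - ε ≤ gd x.1 x'.1 ∧ gd x.1 x'.1 ≤ α + ε from ⟨hxx', t2, t1⟩))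
      (hcx.trans hcx'.symm)
  -- the key lemma: nearby points have the same (unique) colour
  have hkey : ∀ y y' : EuclideanSpace ℝ (Fin (d + 1)), ‖y‖ = 1 → ‖y'‖ = 1 → gd y y' ≤ ε / 2 →
      ∀ i i', col y i → col y' i' → i = i' := by
    intro y y' hy hy' hyy' i i' hcy hcy'
    obtain ⟨g, hg⟩ := exists_isometry_map (hvn i0) hy
    set w : Fin k → EuclideanSpace ℝ (Fin (d + 1)) := fun j => g (v j) with hw
    have hwn : ∀ j, ‖w j‖ = 1 := fun j => by
      rw [hw]; simpa using hvn j
    have hwgd : ∀ j j', j ≠ j' → gd (w j) (w j') = α := fun j j' hjj => by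
      rw [hw]; simpa [gd_isometry] using hclique j j' hjj
    have hwy : w i0 = y := hg
    have hyw : ∀ j, j ≠ i0 → gd y (w j) = α := by
      intro j hj
      rw [← hwy]
      exact hwgd i0 j (Ne.symm hj)
    have hy'w : ∀ j, j ≠ i0 → α - ε / 2 ≤ gd y' (w j) ∧ gd y' (w j) ≤ α + ε / 2 := by
      intro j hj
      have t1 : gd y' (w j) ≤ gd y' y + gd y (w j) := gd_triangle hy' hy (hwn j)
      have t2 : gd y (w j) ≤ gd y y' + gd y' (w j) := gd_triangle hy hy' (hwn j)
      have t3 : gd y' y = gd y y' := gd_comm _ _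
      rw [hyw j hj] at t1 t2
      constructor <;> linarith
    have hwc : ∀ j, ∃ ij, col (w j) ij := fun j => hne (w j) (hwn j)
    choose cw hcw using hwc
    set q : Fin k → Fin k := fun j => if j = i0 then i else cw j with hqdef
    have hqc : ∀ j, j ≠ i0 → col (w j) (q j) := by
      intro j hj
      simp only [hqdef, if_neg hj]
      exact hcw j
    have hcyq : col y (q i0) := by
      simp only [hqdef, if_pos rfl]
      exact hcy
    have main : ∀ a, a ≠ i0 → q i0 = q a → False := by
      intro a ha hqa
      exact hdisj y (w a) hy (hwn a) (by rw [hyw a ha]; linarith)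
        (by rw [hyw a ha]; linarith) (q a) (hqa ▸ hcyq) (hqc a ha)
    have hqinj : Function.Injective q := by
      intro j j' he
      by_contra hne'
      rcases eq_or_ne j i0 with h | hj
      · have hj' : j' ≠ i0 := fun hh => hne' (h.trans hh.symm)
        rw [h] at he
        exact main j' hj' he
      · rcases eq_or_ne j' i0 with h' | hj'
        · rw [h'] at he
          exact main j hj he.symm
        · exact hdisj (w j) (w j') (hwn j) (hwn j') (by rw [hwgd j j' hne']; linarith)
            (by rw [hwgd j j' hne']; linarith) (q j) (hqc j hj) (he ▸ hqc j' hj')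
    have hqsurj : Function.Surjective q := Finite.injective_iff_surjective.mp hqinj
    obtain ⟨j, hj⟩ := hqsurj i'
    rcases eq_or_ne j i0 with h | hj0
    · have hqi : q j = i := by simp [hqdef, h]
      exact hqi.symm.trans hj
    · exfalso
      exact hdisj y' (w j) hy' (hwn j) (hy'w j hj0).1 (hy'w j hj0).2 i' hcy'
        (by rw [← hj]; exact hqc j hj0)
  -- set up the two colours
  obtain ⟨ic, hic⟩ := hne (v i0) (hvn i0)
  obtain ⟨ic', hic'⟩ := hne (v i1) (hvn i1)
  have hicne : ic' ≠ ic := by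
    intro he
    refine hdisj (v i0) (v i1) (hvn i0) (hvn i1) ?_ ?_ ic hic (he ▸ hic') <;>
      rw [hclique i0 i1 h01] <;> linarith
  -- δ and the step lemma
  have hεπ : ε / 2 ≤ Real.pi := by linarith
  have hcos1 : Real.cos (ε / 2) < 1 := by
    have := Real.cos_lt_cos_of_nonneg_of_le_pi (le_refl 0) hεπ (by linarith)
    rwa [Real.cos_zero] at this
  set δ : ℝ := Real.sqrt (2 * (1 - Real.cos (ε / 2))) with hδdef
  have hδ : 0 < δ := Real.sqrt_pos.mpr (by linarith)
  have hstep : ∀ y z : EuclideanSpace ℝ (Fin (d + 1)), ‖y‖ = 1 → ‖z‖ = 1 →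
      dist z y < δ → gd y z ≤ ε / 2 := by
    intro y z hy hz hdzy
    have h2 : dist z y ^ 2 < δ ^ 2 :=
      pow_lt_pow_left₀ hdzy dist_nonneg (by norm_num)
    rw [hδdef, Real.sq_sqrt (by linarith [Real.cos_le_one (ε / 2)])] at h2
    rw [dist_eq_norm] at h2
    have h3 : ‖z - y‖ ^ 2 = 2 - 2 * (inner ℝ z y : ℝ) := by
      rw [norm_sub_sq_real, hz, hy]; ring
    rw [h3] at h2
    have h4 : Real.cos (ε / 2) ≤ (inner ℝ y z : ℝ) := by
      rw [real_inner_comm]; linarith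
    calc gd y z ≤ Real.arccos (Real.cos (ε / 2)) := arccos_anti' h4
      _ = ε / 2 := Real.arccos_cos (by linarith) hεπ
  -- connectedness of the sphere
  have hconn : IsPreconnected (unitSphere d) := by
    have hrank : 1 < Module.rank ℝ (EuclideanSpace ℝ (Fin (d + 1))) := by
      rw [← Module.finrank_eq_rank, finrank_euclideanSpace_fin]
      exact_mod_cast (by omega : 1 < d + 1)
    exact (isConnected_sphere hrank 0 zero_le_one).isPreconnected
  -- the two open sets
  set U : Set (EuclideanSpace ℝ (Fin (d + 1))) :=
    ⋃ (y : EuclideanSpace ℝ (Fin (d + 1))) (_ : ‖y‖ = 1 ∧ col y ic), Metric.ball y δ with hU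
  set V : Set (EuclideanSpace ℝ (Fin (d + 1))) :=
    ⋃ (y : EuclideanSpace ℝ (Fin (d + 1))) (_ : ‖y‖ = 1 ∧ ∃ i, col y i ∧ i ≠ ic),
      Metric.ball y δ with hV
  have hUopen : IsOpen U := isOpen_iUnion fun _ => isOpen_iUnion fun _ => Metric.isOpen_ball
  have hVopen : IsOpen V := isOpen_iUnion fun _ => isOpen_iUnion fun _ => Metric.isOpen_ball
  have hcover : unitSphere d ⊆ U ∪ V := by
    intro y hy
    have hyn : ‖y‖ = 1 := mem_sphere_zero_iff_norm.mp hy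
    obtain ⟨i, hi⟩ := hne y hyn
    rcases eq_or_ne i ic with rfl | hine
    · exact Or.inl (Set.mem_iUnion.mpr ⟨y, Set.mem_iUnion.mpr ⟨⟨hyn, hi⟩,
        Metric.mem_ball_self hδ⟩⟩)
    · exact Or.inr (Set.mem_iUnion.mpr ⟨y, Set.mem_iUnion.mpr ⟨⟨hyn, i, hi, hine⟩,
        Metric.mem_ball_self hδ⟩⟩)
  have hUne : (unitSphere d ∩ U).Nonempty :=
    ⟨v i0, hvS i0, Set.mem_iUnion.mpr ⟨v i0, Set.mem_iUnion.mpr ⟨⟨hvn i0, hic⟩,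
      Metric.mem_ball_self hδ⟩⟩⟩
  have hVne : (unitSphere d ∩ V).Nonempty :=
    ⟨v i1, hvS i1, Set.mem_iUnion.mpr ⟨v i1, Set.mem_iUnion.mpr ⟨⟨hvn i1, ic', hic', hicne⟩,
      Metric.mem_ball_self hδ⟩⟩⟩
  obtain ⟨z, hzS, hzU, hzV⟩ := hconn U V hUopen hVopen hcover hUne hVne
  have hzn : ‖z‖ = 1 := mem_sphere_zero_iff_norm.mp hzS
  obtain ⟨iz, hiz⟩ := hne z hzn
  obtain ⟨y1, hy1⟩ := Set.mem_iUnion.mp hzU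
  obtain ⟨⟨hy1n, hy1c⟩, hz1⟩ := Set.mem_iUnion.mp hy1
  obtain ⟨y2, hy2⟩ := Set.mem_iUnion.mp hzV
  obtain ⟨⟨hy2n, i2, hy2c, hi2ne⟩, hz2⟩ := Set.mem_iUnion.mp hy2
  have e1 : ic = iz :=
    hkey y1 z hy1n hzn (hstep y1 z hy1n hzn (Metric.mem_ball.mp hz1)) ic iz hy1c hiz
  have e2 : i2 = iz :=
    hkey y2 z hy2n hzn (hstep y2 z hy2n hzn (Metric.mem_ball.mp hz2)) i2 iz hy2c hiz
  exact hi2ne (e2.trans e1.symm)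
end

section
/- Let d ≥ 1, α > 0, and k, m ∈ ℕ. Suppose S^d is partitioned into finitely many nonempty sets A_1, …, A_m, each of geodesic diameter strictly less than α, together with a coloring c : {1,…,m} → {1,…,k} and a real δ > α such that whenever j ≠ j' and c(j) = c(j'), every x ∈ A_j and y ∈ A_{j'} satisfy d(x,y) ≥ δ. Then there exists ε₀ > 0 such that for all 0 ≤ ε ≤ ε₀ and every subset X ⊆ S^d, the chromatic number of the ε-distance graph D_{X,ε}(α) is at most k. -/
open scoped RealInnerProductSpace

/-- a partition of `S^d` into finitely many nonempty cells of geodesic diameter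
`< α`, colored with `k` colors so that distinct same-colored cells are at geodesic distance
`≥ δ > α`, yields `χ(D_{X,ε}(α)) ≤ k` for all small `ε ≥ 0` and all `X ⊆ S^d`. -/
theorem stmt_6 (d : ℕ) (hd : 1 ≤ d) (α : ℝ) (hα : 0 < α) (k m : ℕ)
    (A : Fin m → Set (EuclideanSpace ℝ (Fin (d + 1))))
    (hne : ∀ j, (A j).Nonempty)
    (hcover : (⋃ j, A j) = unitSphere d)
    (hdisj : ∀ j j', j ≠ j' → Disjoint (A j) (A j'))
    (hdiam : ∀ j, ∃ β, β < α ∧ ∀ x ∈ A j, ∀ y ∈ A j, gd x y ≤ β)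
    (c : Fin m → Fin k) (δ : ℝ) (hδ : α < δ)
    (hfar : ∀ j j', j ≠ j' → c j = c j' → ∀ x ∈ A j, ∀ y ∈ A j', δ ≤ gd x y) :
    ∃ ε₀ > (0 : ℝ), ∀ ε : ℝ, 0 ≤ ε → ε ≤ ε₀ →
      ∀ X : Set (EuclideanSpace ℝ (Fin (d + 1))), X ⊆ unitSphere d →
        (distGraph X α ε).chromaticNumber ≤ k := by
  classical
  choose B hBlt hBle using hdiam
  -- the sphere is nonempty
  have hsph : (unitSphere d).Nonempty := by
    refine ⟨EuclideanSpace.single (0 : Fin (d + 1)) (1 : ℝ), ?_⟩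
    simp [unitSphere, EuclideanSpace.norm_single]
  have hm : m ≠ 0 := by
    intro h
    subst h
    obtain ⟨p, hp⟩ := hsph
    rw [← hcover] at hp
    simpa using hp
  haveI : Nonempty (Fin m) := ⟨⟨0, Nat.pos_of_ne_zero hm⟩⟩
  set β : ℝ := Finset.univ.sup' Finset.univ_nonempty B with hβdef
  have hβlt : β < α := by
    rw [hβdef, Finset.sup'_lt_iff]
    intro j _
    exact hBlt j
  have hβle : ∀ j, B j ≤ β := fun j => Finset.le_sup' B (Finset.mem_univ j)
  refine ⟨min ((δ - α) / 2) ((α - β) / 2), lt_min (by linarith) (by linarith), ?_⟩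
  intro ε hε0 hε X hX
  have hε1 : ε ≤ (δ - α) / 2 := le_trans hε (min_le_left _ _)
  have hε2 : ε ≤ (α - β) / 2 := le_trans hε (min_le_right _ _)
  -- each point of X lies in some cell
  have hmem : ∀ x : X, ∃ j, (x : EuclideanSpace ℝ (Fin (d + 1))) ∈ A j := by
    intro x
    have : (x : EuclideanSpace ℝ (Fin (d + 1))) ∈ ⋃ j, A j := by
      rw [hcover]; exact hX x.2
    exact Set.mem_iUnion.mp this
  choose J hJ using hmem
  have coloring : (distGraph X α ε).Coloring (Fin k) := by
    refine SimpleGraph.Coloring.mk (fun x => c (J x)) ?_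
    intro x y hadj hc
    obtain ⟨hne', h1, h2⟩ := hadj
    by_cases hJJ : J x = J y
    · have hxy : gd x.1 y.1 ≤ B (J x) := hBle (J x) _ (hJ x) _ (hJJ ▸ hJ y)
      have := hβle (J x)
      linarith
    · have hfar' := hfar (J x) (J y) hJJ hc _ (hJ x) _ (hJ y)
      linarith
  simpa using coloring.colorable.chromaticNumber_le
end

section
/- Let d ≥ 1, 0 < α ≤ π, and 0 < ε < α, and let X ⊆ S^d be a finite (ε/4)-net of S^d. Suppose y ∈ S^d and x_0, x_1, …, x_k ∈ X satisfy d(x_i, y) ≤ ε/4 for all i. Then there exists z ∈ X with z ∉ {x_0, …, x_k} such that α − ε ≤ d(x_i, z) ≤ α + ε for all i = 0, …, k. -/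
open scoped RealInnerProductSpace

lemma arccos_antitone : Antitone Real.arccos := fun a b h => by
  unfold Real.arccos
  have := Real.monotone_arcsin h
  linarith

lemma inner_le_one {n : ℕ} {x y : EuclideanSpace ℝ (Fin n)} (hx : ‖x‖ = 1) (hy : ‖y‖ = 1) :
    |(⟪x, y⟫ : ℝ)| ≤ 1 := by
  have := abs_real_inner_le_norm x y
  rw [hx, hy] at this; simpa using this

lemma gd_nonneg {n : ℕ} (x y : EuclideanSpace ℝ (Fin n)) : 0 ≤ gd x y :=
  Real.arccos_nonneg _

/-- Spherical triangle inequality. -/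
lemma gd_triangle_s8 {n : ℕ} {x y z : EuclideanSpace ℝ (Fin n)}
    (hx : ‖x‖ = 1) (hy : ‖y‖ = 1) (hz : ‖z‖ = 1) :
    gd x z ≤ gd x y + gd y z := by
  by_cases hπ : Real.pi ≤ gd x y + gd y z
  · exact le_trans (Real.arccos_le_pi _) hπ
  push_neg at hπ
  set a : ℝ := ⟪x, y⟫ with ha
  set b : ℝ := ⟪y, z⟫ with hb
  set c : ℝ := ⟪x, z⟫ with hc
  have haa := inner_le_one hx hy
  have hbb := inner_le_one hy hz
  have hcc := inner_le_one hx hz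
  have ha1 := abs_le.mp haa
  have hb1 := abs_le.mp hbb
  -- key inequality: a*b - √(1-a²)·√(1-b²) ≤ c
  have hyy : (⟪y, y⟫ : ℝ) = 1 := by
    rw [real_inner_self_eq_norm_sq, hy]; norm_num
  have hxx : (⟪x, x⟫ : ℝ) = 1 := by
    rw [real_inner_self_eq_norm_sq, hx]; norm_num
  have hzz : (⟪z, z⟫ : ℝ) = 1 := by
    rw [real_inner_self_eq_norm_sq, hz]; norm_num
  set x' := x - a • y with hx'
  set z' := z - b • y with hz'
  have hinner : (⟪x', z'⟫ : ℝ) = c - a * b := by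
    simp only [hx', hz', inner_sub_left, inner_sub_right, real_inner_smul_left,
      real_inner_smul_right, hyy, ← ha, ← hb, ← hc, real_inner_comm y x]
    ring
  have hnx' : ‖x'‖ ^ 2 = 1 - a ^ 2 := by
    rw [← real_inner_self_eq_norm_sq]
    simp only [hx', inner_sub_left, inner_sub_right, real_inner_smul_left,
      real_inner_smul_right, hyy, hxx, ← ha, real_inner_comm y x]
    rw [real_inner_comm]; rw [← ha]; ring
  have hnz' : ‖z'‖ ^ 2 = 1 - b ^ 2 := by
    rw [← real_inner_self_eq_norm_sq]
    simp only [hz', inner_sub_left, inner_sub_right, real_inner_smul_left,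
      real_inner_smul_right, hyy, hzz, ← hb, real_inner_comm y z]
    ring
  have hcs : -(‖x'‖ * ‖z'‖) ≤ (⟪x', z'⟫ : ℝ) := by
    have := abs_real_inner_le_norm x' z'
    cases abs_le.mp this with
    | intro h1 h2 => linarith
  have hnxeq : ‖x'‖ = Real.sqrt (1 - a ^ 2) := by
    rw [← hnx']; exact (Real.sqrt_sq (norm_nonneg _)).symm
  have hnzeq : ‖z'‖ = Real.sqrt (1 - b ^ 2) := by
    rw [← hnz']; exact (Real.sqrt_sq (norm_nonneg _)).symm
  have hkey : a * b - Real.sqrt (1 - a ^ 2) * Real.sqrt (1 - b ^ 2) ≤ c := by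
    rw [← hnxeq, ← hnzeq]; linarith [hcs, hinner.symm.le, hinner.le]
  -- now convert to cosines
  have hcosA : Real.cos (gd x y) = a := Real.cos_arccos ha1.1 ha1.2
  have hcosB : Real.cos (gd y z) = b := Real.cos_arccos hb1.1 hb1.2
  have hsinA : Real.sin (gd x y) = Real.sqrt (1 - a ^ 2) := Real.sin_arccos a
  have hsinB : Real.sin (gd y z) = Real.sqrt (1 - b ^ 2) := Real.sin_arccos b
  have hcosAB : Real.cos (gd x y + gd y z) ≤ c := by
    rw [Real.cos_add, hcosA, hcosB, hsinA, hsinB]; exact hkey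
  calc gd x z = Real.arccos c := rfl
    _ ≤ Real.arccos (Real.cos (gd x y + gd y z)) := arccos_antitone hcosAB
    _ = gd x y + gd y z := Real.arccos_cos
        (add_nonneg (gd_nonneg x y) (gd_nonneg y z)) hπ.le

/-- if `x_0, …, x_k ∈ X` all lie within `ε/4` of some `y ∈ S^d`, where `X` is a
finite `(ε/4)`-net, then some `z ∈ X` distinct from all `x_i` satisfies
`α - ε ≤ d(x_i, z) ≤ α + ε` for all `i`. -/
theorem stmt_8 (d k : ℕ) (hd : 1 ≤ d) (α ε : ℝ) (hα0 : 0 < α) (hαπ : α ≤ Real.pi)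
    (hε0 : 0 < ε) (hεα : ε < α)
    (X : Set (EuclideanSpace ℝ (Fin (d + 1)))) (hXS : X ⊆ unitSphere d)
    (hXfin : X.Finite) (hnet : IsNet d (ε / 4) X)
    (y : EuclideanSpace ℝ (Fin (d + 1))) (hy : y ∈ unitSphere d)
    (x : Fin (k + 1) → EuclideanSpace ℝ (Fin (d + 1))) (hx : ∀ i, x i ∈ X)
    (hclose : ∀ i, gd (x i) y ≤ ε / 4) :
    ∃ z ∈ X, (∀ i, z ≠ x i) ∧ ∀ i, α - ε ≤ gd (x i) z ∧ gd (x i) z ≤ α + ε := by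
  have hyn : ‖y‖ = 1 := by simpa [unitSphere] using hy
  -- find a unit vector orthogonal to y
  obtain ⟨u, hun, hu0⟩ : ∃ u : EuclideanSpace ℝ (Fin (d + 1)), ‖u‖ = 1 ∧ (⟪y, u⟫ : ℝ) = 0 := by
    have hspan : (ℝ ∙ y) ≠ ⊤ := by
      intro h
      have h1 : Module.finrank ℝ (ℝ ∙ y) = 1 :=
        finrank_span_singleton (by intro h'; rw [h'] at hyn; simp at hyn)
      have h2 : Module.finrank ℝ (EuclideanSpace ℝ (Fin (d + 1))) = d + 1 := by
        simp
      rw [h] at h1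
      rw [finrank_top] at h1
      omega
    have hbot : (ℝ ∙ y)ᗮ ≠ ⊥ := by
      intro h
      exact hspan (Submodule.orthogonal_eq_bot_iff.mp h)
    obtain ⟨v, hv, hv0⟩ := Submodule.exists_mem_ne_zero_of_ne_bot hbot
    refine ⟨‖v‖⁻¹ • v, ?_, ?_⟩
    · rw [norm_smul, norm_inv, norm_norm, inv_mul_cancel₀ (norm_ne_zero_iff.mpr hv0)]
    · rw [real_inner_smul_right]
      have hyv := (Submodule.mem_orthogonal (ℝ ∙ y) v).mp hv y (Submodule.mem_span_singleton_self y)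
      rw [hyv, mul_zero]
  -- w at geodesic distance α from y
  set w := Real.cos α • y + Real.sin α • u with hw
  have hwy : (⟪y, w⟫ : ℝ) = Real.cos α := by
    rw [hw]
    rw [inner_add_right, real_inner_smul_right, real_inner_smul_right, hu0,
      real_inner_self_eq_norm_sq, hyn]
    ring
  have hwn : ‖w‖ = 1 := by
    have : ‖w‖ ^ 2 = 1 := by
      rw [hw, norm_add_sq_real, real_inner_smul_left, real_inner_smul_right, hu0,
        norm_smul, norm_smul, hyn, hun]
      simp only [mul_one, mul_zero, Real.norm_eq_abs, mul_pow, sq_abs, one_pow]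
      nlinarith [Real.sin_sq_add_cos_sq α]
    nlinarith [norm_nonneg w]
  have hgyw : gd y w = α := by
    rw [gd, hwy, Real.arccos_cos hα0.le hαπ]
  obtain ⟨z, hzX, hzw⟩ := hnet w (by simpa [unitSphere] using hwn)
  have hzn : ‖z‖ = 1 := by simpa [unitSphere] using hXS hzX
  have hxin : ∀ i, ‖x i‖ = 1 := fun i => by simpa [unitSphere] using hXS (hx i)
  have hub : ∀ i, gd (x i) z ≤ α + ε := by
    intro i
    have t1 := gd_triangle_s8 (hxin i) hyn hwn
    have t2 := gd_triangle_s8 (hxin i) hwn hzn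
    have : gd w z = gd z w := gd_comm w z
    linarith [hclose i, hgyw, hε0]
  have hlb : ∀ i, α - ε / 2 ≤ gd (x i) z := by
    intro i
    have t1 := gd_triangle_s8 hyn (hxin i) hzn
    have t2 := gd_triangle_s8 hyn hzn hwn
    have c1 : gd y (x i) = gd (x i) y := gd_comm y (x i)
    have c2 : gd w z = gd z w := gd_comm w z
    have c3 : gd y z ≤ gd y (x i) + gd (x i) z := t1
    have c4 : gd y w ≤ gd y z + gd z w := t2
    linarith [hclose i, hgyw.symm.le, hgyw.le]
  refine ⟨z, hzX, ?_, fun i => ⟨by linarith [hlb i], hub i⟩⟩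
  intro i hzi
  have : gd (x i) z = 0 := by
    rw [hzi, gd, real_inner_self_eq_norm_sq, hxin i]
    norm_num
  linarith [hlb i]
end

section
/- For every α with 2π/3 < α ≤ π there exists ε₀ > 0 such that for all 0 < ε ≤ ε₀, the chromatic number of the ε-distance graph D_ε(α) on the whole sphere S² is at most 5. -/
open scoped RealInnerProductSpace

/-! ### Auxiliary material for the 5-coloring

We partition the sphere into five pieces, each of geodesic diameter at most `2π/3`:
the polar cap `x 2 ≥ 1/2`, and the four quadrant sectors (according to the signs of
`x 0` and `x 1`) of the remaining region `x 2 ≤ 1/2`.  Within each piece the inner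
product of two points is at least `-1/2`. -/

private lemma aux_prod_lb (a b : ℝ) (ha1 : -1 ≤ a) (hb1 : -1 ≤ b)
    (ha : a ≤ 1/2) (hb : b ≤ 1/2) : -(1/2 : ℝ) ≤ a * b := by
  nlinarith [mul_nonneg (by linarith : (0:ℝ) ≤ 1/2 - a) (by linarith : (0:ℝ) ≤ 1/2 - b),
    mul_nonneg (by linarith : (0:ℝ) ≤ 1 + a) (by linarith : (0:ℝ) ≤ 1 + b)]

/-- Two points of the polar cap have inner product at least `-1/2`. -/
private lemma keyA (x0 x1 x2 y0 y1 y2 : ℝ) (hx : x0^2+x1^2+x2^2 = 1)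
    (hy : y0^2+y1^2+y2^2 = 1) (ha : 1/2 ≤ x2) (hb : 1/2 ≤ y2) :
    -(1/2 : ℝ) ≤ x0*y0+x1*y1+x2*y2 := by
  by_contra h
  push_neg at h
  have hc : (x0*y0+x1*y1)^2 ≤ (1-x2^2)*(1-y2^2) := by
    nlinarith [sq_nonneg (x0*y1 - x1*y0)]
  have hab : (0:ℝ) ≤ x2*y2 := by nlinarith
  have h2 : (1-x2^2)*(1-y2^2) ≤ (x2*y2+1/2)^2 := by
    nlinarith [mul_nonneg (by linarith : (0:ℝ) ≤ x2 - 1/2) (by linarith : (0:ℝ) ≤ y2 - 1/2)]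
  nlinarith [hc, h2, hab, sq_nonneg (x0*y0+x1*y1+x2*y2+1/2)]

/-- Two points of the same quadrant sector have inner product at least `-1/2`. -/
private lemma keyB (x0 x1 x2 y0 y1 y2 : ℝ) (hx : x0^2+x1^2+x2^2 = 1)
    (hy : y0^2+y1^2+y2^2 = 1) (h0 : 0 ≤ x0*y0) (h1 : 0 ≤ x1*y1)
    (ha : x2 ≤ 1/2) (hb : y2 ≤ 1/2) :
    -(1/2 : ℝ) ≤ x0*y0+x1*y1+x2*y2 := by
  have ha1 : -1 ≤ x2 := by nlinarith [sq_nonneg x0, sq_nonneg x1, sq_nonneg (x2+1)]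
  have hb1 : -1 ≤ y2 := by nlinarith [sq_nonneg y0, sq_nonneg y1, sq_nonneg (y2+1)]
  have := aux_prod_lb x2 y2 ha1 hb1 ha hb
  linarith

/-- The 5-coloring of the sphere. -/
noncomputable def sphereCol (x : EuclideanSpace ℝ (Fin 3)) : Fin 5 :=
  if 1/2 ≤ x 2 then 0
  else if 0 ≤ x 0 then (if 0 ≤ x 1 then 1 else 2)
  else (if 0 ≤ x 1 then 3 else 4)

private lemma inner3 (x y : EuclideanSpace ℝ (Fin 3)) :
    (inner ℝ x y : ℝ) = x 0 * y 0 + x 1 * y 1 + x 2 * y 2 := by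
  simp [PiLp.inner_apply, RCLike.inner_apply, Fin.sum_univ_three, mul_comm]

private lemma sphere_coords (x : EuclideanSpace ℝ (Fin 3))
    (hx : x ∈ Metric.sphere (0:EuclideanSpace ℝ (Fin 3)) 1) :
    x 0 ^ 2 + x 1 ^ 2 + x 2 ^ 2 = 1 := by
  have h : ‖x‖ = 1 := mem_sphere_zero_iff_norm.mp hx
  have h2 : (inner ℝ x x : ℝ) = 1 := by
    rw [real_inner_self_eq_norm_sq, h]; norm_num
  rw [inner3] at h2
  nlinarith [h2]

/-- Same color implies inner product at least `-1/2`. -/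
private lemma sameCol_inner (x y : EuclideanSpace ℝ (Fin 3))
    (hx : x ∈ Metric.sphere (0:EuclideanSpace ℝ (Fin 3)) 1)
    (hy : y ∈ Metric.sphere (0:EuclideanSpace ℝ (Fin 3)) 1)
    (h : sphereCol x = sphereCol y) :
    -(1/2 : ℝ) ≤ (inner ℝ x y : ℝ) := by
  have hx3 := sphere_coords x hx
  have hy3 := sphere_coords y hy
  rw [inner3]
  unfold sphereCol at h
  split_ifs at h with h1 h2 h3 h4 h5 h6 h7 h8 h9 h10 h11 h12 h13 <;>
    first
      | exact absurd h (by decide)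
      | (apply keyA _ _ _ _ _ _ hx3 hy3 <;> assumption)
      | (apply keyB _ _ _ _ _ _ hx3 hy3 <;>
          first
            | (apply mul_nonneg <;> assumption)
            | nlinarith
            | linarith)

/-- Same color implies geodesic distance at most `2π/3`. -/
private lemma sameCol_gd (x y : EuclideanSpace ℝ (Fin 3))
    (hx : x ∈ Metric.sphere (0:EuclideanSpace ℝ (Fin 3)) 1)
    (hy : y ∈ Metric.sphere (0:EuclideanSpace ℝ (Fin 3)) 1)
    (h : sphereCol x = sphereCol y) :
    gd x y ≤ 2 * Real.pi / 3 := by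
  have hi := sameCol_inner x y hx hy h
  have h23 : Real.arccos (-(1/2)) = 2 * Real.pi / 3 := by
    have h3 : Real.arccos (1/2) = Real.pi / 3 := by
      rw [← Real.cos_pi_div_three]
      exact Real.arccos_cos (by positivity) (by linarith [Real.pi_pos])
    rw [Real.arccos_neg, h3]; ring
  have hmono : Real.arccos (inner ℝ x y : ℝ) ≤ Real.arccos (-(1/2)) := by
    unfold Real.arccos
    exact sub_le_sub_left (Real.monotone_arcsin hi) _
  rw [h23] at hmono
  exact hmono

/-- for `2π/3 < α ≤ π` the ε-distance graph on the whole sphere `S²` is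
`5`-colorable for all small `ε > 0`. -/
theorem stmt_16 (α : ℝ) (hαl : 2 * Real.pi / 3 < α) (hαπ : α ≤ Real.pi) :
    ∃ ε₀ > (0 : ℝ), ∀ ε : ℝ, 0 < ε → ε ≤ ε₀ →
      (distGraph (unitSphere 2) α ε).chromaticNumber ≤ 5 := by
  refine ⟨(α - 2 * Real.pi / 3) / 2, by linarith, ?_⟩
  intro ε hε hε₀
  have hcol : (distGraph (unitSphere 2) α ε).Colorable 5 := by
    refine ⟨SimpleGraph.Coloring.mk (fun v => sphereCol v.1) ?_⟩
    intro a b hadj hcc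
    have hgd : gd a.1 b.1 ≤ 2 * Real.pi / 3 := sameCol_gd a.1 b.1 a.2 b.2 hcc
    have hlb : α - ε ≤ gd a.1 b.1 := hadj.2.1
    linarith
  calc (distGraph (unitSphere 2) α ε).chromaticNumber ≤ (5 : ℕ) :=
        hcol.chromaticNumber_le
    _ ≤ 5 := by norm_num
end
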